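/- For 0 ≤ d < k < ∞, the independence entropy of the run-length limited shift RLL(d,k) equals ⌊(k−d)/(d+1)⌋·log 2 / (⌊(k+1)/(d+1)⌋·(d+1)). -/

import Mathlib

open Filter

/-- The run-length limited shift `RLL(d,k)`: binary bi-infinite sequences (`true` = 1)
in which every maximal run of 0s has length in `[d,k]`. Equivalently: every window of
length `k+1` contains a 1, and consecutive 1s are at distance `≥ d+1`. -/
def RLL (d k : ℕ) : Set (ℤ → Bool) :=
  {x | (∀ i : ℤ, ∃ j : ℤ, i ≤ j ∧ j ≤ i + k ∧ x j = true) ∧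
       (∀ i j : ℤ, i < j → j ≤ i + d → ¬(x i = true ∧ x j = true))}

/-- A string of nonempty subsets of `{0,1}` is independently legal for `RLL(d,k)` if
every selection yields a word appearing in a point of `RLL(d,k)`. -/
def rllIndepLegal (d k : ℕ) {n : ℕ} (A : Fin n → Finset Bool) : Prop :=
  (∀ i, (A i).Nonempty) ∧ ∀ w : Fin n → Bool, (∀ i, w i ∈ A i) →
    ∃ x ∈ RLL d k, ∃ m : ℤ, ∀ i : Fin n, x (m + (i : ℤ)) = w i

/-- The maximal independence score of independently legal strings of length `n`. -/
noncomputable def rllMaxScore (d k : ℕ) (n : ℕ) : ℝ :=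
  sSup {r : ℝ | ∃ A : Fin n → Finset Bool, rllIndepLegal d k A ∧
    r = ∑ i, Real.log ((A i).card)}

namespace Stmt13Aux

/-- `p` -/
def pp (d k : ℕ) : ℕ := (k - d) / (d + 1)
/-- `m` -/
def mm (d k : ℕ) : ℕ := (pp d k + 1) * (d + 1)

lemma mm_pos (d k : ℕ) : 0 < mm d k := Nat.mul_pos (by omega) (by omega)

lemma mm_le (d k : ℕ) (hdk : d < k) : mm d k ≤ k + 1 := by
  have h1 : pp d k * (d+1) ≤ k - d := Nat.div_mul_le_self _ _
  have : mm d k = pp d k * (d+1) + (d+1) := by rw [mm]; ring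
  omega

lemma k_le (d k : ℕ) (hdk : d < k) : k ≤ pp d k * (d+1) + 2*d := by
  have h1 := Nat.div_add_mod (k - d) (d+1)
  have h2 : (k - d) % (d+1) < d + 1 := Nat.mod_lt _ (by omega)
  have h3 : (d+1) * ((k-d)/(d+1)) = pp d k * (d+1) := by rw [pp]; ring
  omega

lemma div_succ (d k : ℕ) (hdk : d < k) : (k + 1) / (d + 1) = pp d k + 1 := by
  have : k + 1 = (k - d) + (d + 1) := by omega
  rw [this, Nat.add_div_right _ (by omega)]; rfl

/-- spread of a (d+1)-separated set -/
lemma spread (d : ℕ) : ∀ c : ℕ, ∀ S : Finset ℤ, S.card = c → ∀ hS : S.Nonempty,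
    (∀ a ∈ S, ∀ b ∈ S, a ≠ b → ((d:ℤ)+1) ≤ |a - b|) →
    ((c:ℤ) - 1) * ((d:ℤ)+1) ≤ S.max' hS - S.min' hS := by
  intro c
  induction c with
  | zero => intro S hc hS _; exact absurd (Finset.card_eq_zero.mp hc) hS.ne_empty
  | succ c ih =>
    intro S hc hS hsep
    rcases Nat.eq_zero_or_pos c with hc0 | hc1
    · subst hc0
      have : S.min' hS ≤ S.max' hS := S.min'_le _ (S.max'_mem hS)
      push_cast; linarith
    · have h2 : 1 < S.card := by omega
      set M := S.max' hS with hM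
      set S' := S.erase M with hS'
      have hMS : M ∈ S := S.max'_mem hS
      have hminlt : S.min' hS < M := S.min'_lt_max'_of_card h2
      have hcard' : S'.card = c := by rw [hS', Finset.card_erase_of_mem hMS]; omega
      have hS'ne : S'.Nonempty := Finset.card_pos.mp (by omega)
      have hsub : S' ⊆ S := Finset.erase_subset _ _
      have hsep' : ∀ a ∈ S', ∀ b ∈ S', a ≠ b → ((d:ℤ)+1) ≤ |a - b| :=
        fun a ha b hb => hsep a (hsub ha) b (hsub hb)
      have hih := ih S' hcard' hS'ne hsep'
      -- min' S' = min' S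
      have hminmem : S.min' hS ∈ S' := Finset.mem_erase.mpr ⟨ne_of_lt hminlt, S.min'_mem hS⟩
      have hmin_eq : S'.min' hS'ne = S.min' hS := by
        apply le_antisymm (S'.min'_le _ hminmem)
        exact S.min'_le _ (hsub (S'.min'_mem hS'ne))
      -- max' S' ≤ M - (d+1)
      have hmax'mem : S'.max' hS'ne ∈ S' := S'.max'_mem hS'ne
      have hne : S'.max' hS'ne ≠ M := (Finset.mem_erase.mp hmax'mem).1
      have hle : S'.max' hS'ne ≤ M := S.le_max' _ (hsub hmax'mem)
      have habs := hsep _ (hsub hmax'mem) M hMS hne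
      have : ((d:ℤ)+1) ≤ M - S'.max' hS'ne := by
        rcases abs_cases (S'.max' hS'ne - M) with ⟨h, _⟩ | ⟨h, _⟩ <;> omega
      push_cast
      push_cast at hih
      rw [hmin_eq] at hih
      linarith

lemma nonempty_true_mem {A : Finset Bool} (h : A.Nonempty) (hf : false ∉ A) : true ∈ A := by
  obtain ⟨b, hb⟩ := h
  cases b
  · exact absurd hb hf
  · exact hb

/-- the canonical selection -/
def selOne {n : ℕ} (A : Fin n → Finset Bool) : Fin n → Bool :=
  fun t => if false ∈ A t then false else true

lemma selOne_mem {n : ℕ} {A : Fin n → Finset Bool} (h : ∀ i, (A i).Nonempty) (t : Fin n) :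
    selOne A t ∈ A t := by
  unfold selOne
  by_cases hf : false ∈ A t
  · simp [hf]
  · simp [hf]; exact nonempty_true_mem (h t) hf

lemma two_true_conflict {d k n : ℕ} {A : Fin n → Finset Bool}
    (hA : rllIndepLegal d k A) {i j : Fin n}
    (hij : (i:ℕ) < j) (hjd : (j:ℕ) ≤ i + d)
    (hi : true ∈ A i) (hj : true ∈ A j) : False := by
  obtain ⟨hne, hleg⟩ := hA
  set w : Fin n → Bool := fun t => if t = i ∨ t = j then true else selOne A t with hw
  have hwmem : ∀ t, w t ∈ A t := by
    intro t
    by_cases h : t = i ∨ t = j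
    · rw [hw]; simp only [if_pos h]
      rcases h with h | h <;> subst h <;> assumption
    · rw [hw]; simp only [if_neg h]; exact selOne_mem hne t
  obtain ⟨x, hx, m0, hm0⟩ := hleg w hwmem
  have h1 : x (m0 + (i:ℤ)) = true := by rw [hm0]; rw [hw]; simp
  have h2 : x (m0 + (j:ℤ)) = true := by rw [hm0]; rw [hw]; simp
  refine hx.2 (m0 + (i:ℤ)) (m0 + (j:ℤ)) ?_ ?_ ⟨h1, h2⟩
  · have : ((i:ℕ):ℤ) < ((j:ℕ):ℤ) := by exact_mod_cast hij
    omega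
  · have : ((j:ℕ):ℤ) ≤ ((i:ℕ):ℤ) + (d:ℤ) := by exact_mod_cast hjd
    omega

end Stmt13Aux

namespace Stmt13Aux

/-- the extremal multi-choice string -/
def Acon (d k n : ℕ) : Fin n → Finset Bool := fun i =>
  if mm d k ∣ (i:ℕ) then {true} else if (d+1) ∣ (i:ℕ) then {true, false} else {false}

lemma dvd_mm (d k : ℕ) : (d+1) ∣ mm d k := ⟨pp d k + 1, by rw [mm]; ring⟩

lemma Acon_legal (d k n : ℕ) (hdk : d < k) : rllIndepLegal d k (Acon d k n) := by
  constructor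
  · intro i
    unfold Acon
    split
    · exact ⟨true, by simp⟩
    · split
      · exact ⟨true, by simp⟩
      · exact ⟨false, by simp⟩
  · intro w hw
    set M : ℤ := (mm d k : ℤ) with hM
    have hMpos : 0 < M := by rw [hM]; exact_mod_cast mm_pos d k
    have hdvdM : ((d:ℤ)+1) ∣ M := by
      have := dvd_mm d k
      rw [hM]
      exact_mod_cast Int.natCast_dvd_natCast.mpr this
    set x : ℤ → Bool := fun j =>
      if M ∣ j then true
      else if ((d:ℤ)+1) ∣ j then
        (if h : 0 ≤ j ∧ j < n then w ⟨j.toNat, by omega⟩ else false)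
      else false with hxdef
    have hx1 : ∀ j : ℤ, x j = true → ((d:ℤ)+1) ∣ j := by
      intro j hj
      rw [hxdef] at hj
      simp only at hj
      split at hj
      · exact dvd_trans hdvdM (by assumption)
      · split at hj
        · assumption
        · simp at hj
    refine ⟨x, ⟨?_, ?_⟩, 0, ?_⟩
    · -- window condition
      intro i
      set q : ℤ := (i + M - 1) / M with hq
      set r : ℤ := (i + M - 1) % M with hr
      have hqr : M * q + r = i + M - 1 := Int.mul_ediv_add_emod _ _
      have hr0 : 0 ≤ r := Int.emod_nonneg _ (by omega)
      have hrM : r < M := Int.emod_lt_of_pos _ hMpos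
      refine ⟨M * q, by omega, ?_, ?_⟩
      · have hMk : M ≤ (k:ℤ) + 1 := by
          rw [hM]
          exact_mod_cast mm_le d k hdk
        omega
      · rw [hxdef]; simp only [if_pos (Dvd.intro q rfl)]
    · -- distance condition
      intro i j hij hjd ⟨hxi, hxj⟩
      have hi := hx1 i hxi
      have hj := hx1 j hxj
      have hdvd : ((d:ℤ)+1) ∣ (j - i) := Dvd.dvd.sub hj hi
      have := Int.le_of_dvd (by omega) hdvd
      omega
    · -- matching
      intro i
      have hi0 : (0:ℤ) ≤ (i:ℤ) := by positivity
      have hin : ((i:ℕ):ℤ) < (n:ℤ) := by exact_mod_cast i.isLt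
      rw [zero_add, hxdef]
      simp only
      have hwa := hw i
      by_cases h1 : mm d k ∣ (i:ℕ)
      · have h1' : M ∣ ((i:ℕ):ℤ) := by rw [hM]; exact_mod_cast Int.natCast_dvd_natCast.mpr h1
        rw [if_pos h1']
        unfold Acon at hwa
        rw [if_pos h1] at hwa
        simp at hwa
        exact hwa.symm
      · have h1' : ¬ M ∣ ((i:ℕ):ℤ) := by
          intro hc
          exact h1 (by exact_mod_cast Int.natCast_dvd_natCast.mp hc)
        rw [if_neg h1']
        by_cases h2 : (d+1) ∣ (i:ℕ)
        · have h2' : ((d:ℤ)+1) ∣ ((i:ℕ):ℤ) := by exact_mod_cast Int.natCast_dvd_natCast.mpr h2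
          rw [if_pos h2', dif_pos ⟨hi0, hin⟩]
          have heq : (⟨((i:ℕ):ℤ).toNat, by omega⟩ : Fin n) = i := by
            apply Fin.ext
            simp
          rw [heq]
        · have h2' : ¬ ((d:ℤ)+1) ∣ ((i:ℕ):ℤ) := by
            intro hc
            exact h2 (by exact_mod_cast Int.natCast_dvd_natCast.mp hc)
          rw [if_neg h2']
          unfold Acon at hwa
          rw [if_neg h1, if_neg h2] at hwa
          simp at hwa
          exact hwa.symm

end Stmt13Aux

namespace Stmt13Aux

lemma card_le_two (A : Finset Bool) : A.card ≤ 2 := by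
  have := Finset.card_le_univ A
  simpa using this

/-- score formula: the sum of logs equals (#free)·log 2 -/
lemma score_eq {n : ℕ} (A : Fin n → Finset Bool) (hne : ∀ i, (A i).Nonempty) :
    ∑ i, Real.log ((A i).card) =
      ((Finset.univ.filter (fun i : Fin n => (A i).card = 2)).card : ℝ) * Real.log 2 := by
  rw [← Finset.sum_filter_add_sum_filter_not Finset.univ (fun i => (A i).card = 2)]
  have h1 : ∑ i ∈ Finset.univ.filter (fun i : Fin n => (A i).card = 2),
      Real.log ((A i).card) =
      ((Finset.univ.filter (fun i : Fin n => (A i).card = 2)).card : ℝ) * Real.log 2 := by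
    rw [Finset.sum_congr rfl (fun i hi => ?_), Finset.sum_const, nsmul_eq_mul]
    rw [(Finset.mem_filter.mp hi).2]
    norm_num
  have h2 : ∑ i ∈ Finset.univ.filter (fun i : Fin n => ¬ (A i).card = 2),
      Real.log ((A i).card) = 0 := by
    apply Finset.sum_eq_zero
    intro i hi
    have h2' := (Finset.mem_filter.mp hi).2
    have hle := card_le_two (A i)
    have hpos := Finset.card_pos.mpr (hne i)
    have : (A i).card = 1 := by omega
    rw [this]
    norm_num
  rw [h1, h2, add_zero]

lemma Acon_card_two {d k n : ℕ} {i : Fin n} (h1 : ¬ mm d k ∣ (i:ℕ)) (h2 : (d+1) ∣ (i:ℕ)) :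
    (Acon d k n i).card = 2 := by
  unfold Acon
  rw [if_neg h1, if_pos h2]
  decide

/-- lower bound on the number of free positions in `Acon` -/
lemma Acon_count (d k n : ℕ) (hdk : d < k) :
    pp d k * (n / mm d k) ≤
      (Finset.univ.filter (fun i : Fin n => (Acon d k n i).card = 2)).card := by
  rcases Nat.eq_zero_or_pos (n / mm d k) with h0 | hpos
  · simp [h0]
  have hn : 0 < n := by
    by_contra h
    have : n = 0 := by omega
    subst this
    simp at hpos
  set m := mm d k with hm
  set p := pp d k with hp
  have hmpos : 0 < m := mm_pos d k
  set f : ℕ × ℕ → Fin n := fun q =>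
    if h : q.1 * m + (q.2+1)*(d+1) < n then ⟨q.1 * m + (q.2+1)*(d+1), h⟩ else ⟨0, hn⟩ with hf
  have key : ∀ q ∈ Finset.range (n / m) ×ˢ Finset.range p,
      q.1 * m + (q.2+1)*(d+1) < n ∧ ¬ m ∣ (q.1 * m + (q.2+1)*(d+1)) ∧
        (d+1) ∣ (q.1 * m + (q.2+1)*(d+1)) := by
    rintro ⟨t, j⟩ hq
    dsimp only
    rw [Finset.mem_product, Finset.mem_range, Finset.mem_range] at hq
    obtain ⟨ht, hj⟩ := hq
    have hjm : (j+1)*(d+1) < m := by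
      have : (j+1)*(d+1) ≤ p * (d+1) := Nat.mul_le_mul_right _ (by omega)
      have hpm : p * (d+1) < m := by
        rw [hm, mm, ← hp]
        have : (p+1)*(d+1) = p*(d+1) + (d+1) := by ring
        omega
      omega
    refine ⟨?_, ?_, ?_⟩
    · have h1 : t * m + m ≤ (n/m) * m := by
        have : t + 1 ≤ n/m := ht
        calc t * m + m = (t+1) * m := by ring
        _ ≤ (n/m) * m := Nat.mul_le_mul_right _ this
      have h2 : (n/m) * m ≤ n := Nat.div_mul_le_self n m
      omega
    · intro hdvd
      have h1 : m ∣ (j+1)*(d+1) := (Nat.dvd_add_right ⟨t, by ring⟩).mp hdvd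
      have := Nat.le_of_dvd (by positivity) h1
      omega
    · have hd1 : (d+1) ∣ m := dvd_mm d k
      exact Dvd.dvd.add (Dvd.dvd.mul_left hd1 t) ⟨j+1, by ring⟩
  have hmaps : ∀ q ∈ Finset.range (n / m) ×ˢ Finset.range p,
      f q ∈ Finset.univ.filter (fun i : Fin n => (Acon d k n i).card = 2) := by
    intro q hq
    obtain ⟨hlt, hnd, hd⟩ := key q hq
    rw [Finset.mem_filter]
    refine ⟨Finset.mem_univ _, ?_⟩
    rw [hf]
    simp only [dif_pos hlt]
    exact Acon_card_two hnd hd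
  have hinj : Set.InjOn f ((Finset.range (n / m) ×ˢ Finset.range p : Finset (ℕ × ℕ)) : Set (ℕ × ℕ)) := by
    intro q1 hq1 q2 hq2 heq
    rw [Finset.mem_coe] at hq1 hq2
    obtain ⟨hlt1, _, _⟩ := key q1 hq1
    obtain ⟨hlt2, _, _⟩ := key q2 hq2
    rw [hf] at heq
    simp only [dif_pos hlt1, dif_pos hlt2] at heq
    have hval : q1.1 * m + (q1.2+1)*(d+1) = q2.1 * m + (q2.2+1)*(d+1) := by
      exact congrArg Fin.val heq
    rw [Finset.mem_product, Finset.mem_range, Finset.mem_range] at hq1 hq2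
    have hb1 : (q1.2+1)*(d+1) < m := by
      have : (q1.2+1)*(d+1) ≤ p * (d+1) := Nat.mul_le_mul_right _ (by omega)
      have hpm : (p+1) * (d+1) = p*(d+1) + (d+1) := by ring
      have hmm : m = (p+1)*(d+1) := by rw [hm, mm, ← hp]
      omega
    have hb2 : (q2.2+1)*(d+1) < m := by
      have : (q2.2+1)*(d+1) ≤ p * (d+1) := Nat.mul_le_mul_right _ (by omega)
      have hpm : (p+1) * (d+1) = p*(d+1) + (d+1) := by ring
      have hmm : m = (p+1)*(d+1) := by rw [hm, mm, ← hp]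
      omega
    have e1 : ∀ t r : ℕ, r < m → (t * m + r) / m = t := by
      intro t r hr
      rw [mul_comm, Nat.mul_add_div hmpos, Nat.div_eq_of_lt hr, add_zero]
    have ht : q1.1 = q2.1 := by
      calc q1.1 = (q1.1 * m + (q1.2+1)*(d+1)) / m := (e1 _ _ hb1).symm
      _ = (q2.1 * m + (q2.2+1)*(d+1)) / m := by rw [hval]
      _ = q2.1 := e1 _ _ hb2
    have hj : q1.2 = q2.2 := by
      rw [ht] at hval
      have := Nat.add_left_cancel hval
      have := Nat.eq_of_mul_eq_mul_right (show 0 < d+1 by omega) this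
      omega
    exact Prod.ext ht hj
  have hle := Finset.card_le_card_of_injOn f hmaps hinj
  calc p * (n / m) = ((Finset.range (n / m)) ×ˢ (Finset.range p)).card := by
        rw [Finset.card_product, Finset.card_range, Finset.card_range]; ring
  _ ≤ _ := hle

end Stmt13Aux

namespace Stmt13Aux

lemma free_univ {A : Finset Bool} (h : A.card = 2) : A = Finset.univ :=
  Finset.eq_univ_of_card _ (by simpa using h)

lemma free_true {A : Finset Bool} (h : A.card = 2) : true ∈ A := by
  rw [free_univ h]; exact Finset.mem_univ _

lemma free_false {A : Finset Bool} (h : A.card = 2) : false ∈ A := by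
  rw [free_univ h]; exact Finset.mem_univ _

lemma far_abs (D : ℤ) (hD0 : 0 ≤ D) {u v : ℤ} (h : v + (D+1) ≤ u ∨ u + (D+1) ≤ v) :
    (D+1) ≤ |u - v| := by
  rcases h with h | h
  · rw [abs_of_nonneg (by omega)]; omega
  · rw [abs_of_nonpos (by omega)]; omega

lemma window_bound {d k n : ℕ} (hdk : d < k) {A : Fin n → Finset Bool}
    (hA : rllIndepLegal d k A) (a : ℕ) (ha : d ≤ a) (hb : a + mm d k + d ≤ n) :
    (Finset.univ.filter (fun i : Fin n =>
      (A i).card = 2 ∧ a ≤ (i:ℕ) ∧ (i:ℕ) < a + mm d k)).card ≤ pp d k := by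
  by_contra hcon
  push_neg at hcon
  have hMval : (mm d k : ℤ) = ((pp d k : ℤ) + 1) * ((d:ℤ) + 1) := by
    rw [mm]; push_cast; ring
  set F := Finset.univ.filter (fun i : Fin n =>
      (A i).card = 2 ∧ a ≤ (i:ℕ) ∧ (i:ℕ) < a + mm d k) with hF
  set S : Finset ℤ := F.image (fun i : Fin n => ((i:ℕ):ℤ)) with hS
  have hvinj : Function.Injective (fun i : Fin n => ((i:ℕ):ℤ)) := by
    intro i j h
    have h' : ((i:ℕ):ℤ) = ((j:ℕ):ℤ) := h
    exact Fin.ext (by exact_mod_cast h')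
  have hcardS : S.card = F.card := Finset.card_image_of_injective _ hvinj
  have hScard : (pp d k) + 1 ≤ S.card := by omega
  have hSne : S.Nonempty := Finset.card_pos.mp (by omega)
  have hmemS : ∀ z ∈ S, ∃ i : Fin n, ((i:ℕ):ℤ) = z ∧ (A i).card = 2 ∧
      (a:ℤ) ≤ z ∧ z < (a:ℤ) + ((mm d k : ℤ)) := by
    intro z hz
    rw [hS, Finset.mem_image] at hz
    obtain ⟨i, hi, hiz⟩ := hz
    rw [hF, Finset.mem_filter] at hi
    obtain ⟨_, hc, h1, h2⟩ := hi
    exact ⟨i, hiz, hc, by omega, by omega⟩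
  have hsep : ∀ z1 ∈ S, ∀ z2 ∈ S, z1 ≠ z2 → (((d:ℤ))+1) ≤ |z1 - z2| := by
    intro z1 h1 z2 h2 hne12
    obtain ⟨i, hiz, hci, _, _⟩ := hmemS z1 h1
    obtain ⟨j, hjz, hcj, _, _⟩ := hmemS z2 h2
    by_contra hlt
    push_neg at hlt
    have habs := abs_lt.mp hlt
    rcases lt_trichotomy (i:ℕ) (j:ℕ) with h | h | h
    · exact two_true_conflict hA h (by omega) (free_true hci) (free_true hcj)
    · exact hne12 (by omega)
    · exact two_true_conflict hA h (by omega) (free_true hcj) (free_true hci)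
  set y0 : ℤ := S.min' hSne with hy0
  set y1 : ℤ := S.max' hSne with hy1
  obtain ⟨_, _, hy0a, hy0b⟩ := hmemS y0 (S.min'_mem hSne)
  obtain ⟨_, _, hy1a, hy1b⟩ := hmemS y1 (S.max'_mem hSne)
  have hspr := spread d S.card S rfl hSne hsep
  have hPspr : ((pp d k : ℤ)) * (((d:ℤ)) + 1) ≤ y1 - y0 := by
    refine le_trans ?_ hspr
    exact mul_le_mul_of_nonneg_right (by omega) (by omega)
  -- no forced one near the window
  have hnear : ∀ i : Fin n, y0 - ((d:ℤ)) ≤ ((i:ℕ):ℤ) → ((i:ℕ):ℤ) ≤ y1 + ((d:ℤ)) →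
      true ∈ A i → false ∈ A i := by
    intro i hl hr htrue
    by_cases hfree : (A i).card = 2
    · exact free_false hfree
    · exfalso
      have hiS : ((i:ℕ):ℤ) ∉ S := by
        intro hc
        obtain ⟨j, hjz, hcj, _, _⟩ := hmemS _ hc
        have : j = i := hvinj hjz
        subst this
        exact hfree hcj
      by_cases hclose : ∃ z ∈ S, |((i:ℕ):ℤ) - z| ≤ ((d:ℤ))
      · obtain ⟨z, hzS, hzd⟩ := hclose
        obtain ⟨j, hjz, hcj, _, _⟩ := hmemS z hzS
        have habs := abs_le.mp hzd
        have hij : (i:ℕ) ≠ (j:ℕ) := by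
          intro h
          exact hiS (by rw [show ((i:ℕ):ℤ) = ((j:ℕ):ℤ) by exact_mod_cast h, hjz]; exact hzS)
        rcases lt_trichotomy (i:ℕ) (j:ℕ) with h | h | h
        · exact two_true_conflict hA h (by omega) htrue (free_true hcj)
        · exact hij h
        · exact two_true_conflict hA h (by omega) (free_true hcj) htrue
      · push_neg at hclose
        have hfar : ∀ z ∈ S, z + (((d:ℤ))+1) ≤ ((i:ℕ):ℤ) ∨ ((i:ℕ):ℤ) + (((d:ℤ))+1) ≤ z := by
          intro z hz
          have h := hclose z hz
          rcases le_or_gt z ((i:ℕ):ℤ) with hle | hlt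
          · left
            have : ¬ (((i:ℕ):ℤ) - z ≤ ((d:ℤ))) := fun hc => absurd (abs_le.mpr ⟨by omega, hc⟩) (by omega)
            omega
          · right
            have : ¬ (z - ((i:ℕ):ℤ) ≤ ((d:ℤ))) := fun hc =>
              absurd (by rw [abs_sub_comm]; exact abs_le.mpr ⟨by omega, hc⟩ : |((i:ℕ):ℤ) - z| ≤ ((d:ℤ))) (by omega)
            omega
        have hstrict0 : y0 + (((d:ℤ))+1) ≤ ((i:ℕ):ℤ) := by
          rcases hfar y0 (S.min'_mem hSne) with h | h <;> omega
        have hstrict1 : ((i:ℕ):ℤ) + (((d:ℤ))+1) ≤ y1 := by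
          rcases hfar y1 (S.max'_mem hSne) with h | h <;> omega
        set S' : Finset ℤ := insert ((i:ℕ):ℤ) S with hS'
        have hS'card : S'.card = S.card + 1 := Finset.card_insert_of_notMem hiS
        have hS'ne : S'.Nonempty := ⟨_, Finset.mem_insert_self _ _⟩
        have hsep' : ∀ u ∈ S', ∀ v ∈ S', u ≠ v → (((d:ℤ))+1) ≤ |u - v| := by
          intro u hu v hv huv
          rcases Finset.mem_insert.mp hu with hu1 | hu2 <;>
            rcases Finset.mem_insert.mp hv with hv1 | hv2
          · exact absurd (hu1.trans hv1.symm) huv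
          · subst hu1
            exact far_abs ((d:ℤ)) (by omega) (hfar v hv2)
          · subst hv1
            exact far_abs ((d:ℤ)) (by omega) (hfar u hu2).symm
          · exact hsep u hu2 v hv2 huv
        have hmin' : S'.min' hS'ne = y0 := by
          apply le_antisymm
          · exact Finset.min'_le _ _ (Finset.mem_insert_of_mem (S.min'_mem hSne))
          · apply Finset.le_min'
            intro v hv
            rcases Finset.mem_insert.mp hv with h | h
            · omega
            · exact S.min'_le v h
        have hmax' : S'.max' hS'ne = y1 := by
          apply le_antisymm
          · apply Finset.max'_le
            intro v hv
            rcases Finset.mem_insert.mp hv with h | h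
            · omega
            · exact S.le_max' v h
          · exact Finset.le_max' _ _ (Finset.mem_insert_of_mem (S.max'_mem hSne))
        have hspr' := spread d S'.card S' rfl hS'ne hsep'
        rw [hmin', hmax'] at hspr'
        have h1 : (((pp d k : ℤ))+1)*(((d:ℤ))+1) ≤ ((S'.card:ℤ) - 1) * (((d:ℤ))+1) :=
          mul_le_mul_of_nonneg_right (by omega) (by omega)
        have h2 : (((pp d k : ℤ))+1)*(((d:ℤ))+1) ≤ y1 - y0 := le_trans h1 hspr'
        rw [← hMval] at h2
        omega
  -- final selection
  obtain ⟨hne, hleg⟩ := hA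
  obtain ⟨x, hx, m0, hm0⟩ := hleg (selOne A) (selOne_mem hne)
  obtain ⟨j, hj1, hj2, hjt⟩ := hx.1 (m0 + (y0 - ((d:ℤ))))
  set t : ℤ := j - m0 with htdef
  have ht1 : y0 - ((d:ℤ)) ≤ t := by omega
  have hkle : (k:ℤ) ≤ (pp d k : ℤ) * ((d:ℤ)+1) + 2*(d:ℤ) := by exact_mod_cast k_le d k hdk
  have ht2 : t ≤ y1 + ((d:ℤ)) := by
    have : t ≤ y0 - ((d:ℤ)) + k := by omega
    omega
  have ht0 : 0 ≤ t := by omega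
  have htn : t < (n:ℤ) := by
    have hb' : (a:ℤ) + ((mm d k : ℤ)) + ((d:ℤ)) ≤ (n:ℤ) := by
      have : ((a + mm d k + d : ℕ):ℤ) ≤ ((n:ℕ):ℤ) := by exact_mod_cast hb
      push_cast at this
      omega
    omega
  set i' : Fin n := ⟨t.toNat, by omega⟩ with hi'def
  have hti' : ((i':ℕ):ℤ) = t := Int.toNat_of_nonneg ht0
  have hxi' := hm0 i'
  have heqj : m0 + ((i':ℕ):ℤ) = j := by rw [hti']; omega
  rw [heqj, hjt] at hxi'
  have hfni : false ∉ A i' := by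
    intro hf
    unfold selOne at hxi'
    rw [if_pos hf] at hxi'
    exact Bool.noConfusion hxi'
  have htri : true ∈ A i' := by
    have hmem := selOne_mem hne i'
    rw [← hxi'] at hmem
    exact hmem
  exact hfni (hnear i' (by omega) (by omega) htri)

end Stmt13Aux

namespace Stmt13Aux

lemma free_count_bound {d k n : ℕ} (hdk : d < k) {A : Fin n → Finset Bool}
    (hA : rllIndepLegal d k A) :
    (Finset.univ.filter (fun i : Fin n => (A i).card = 2)).card ≤
      2*d + mm d k + pp d k * (n / mm d k) := by
  have hmpos : 0 < mm d k := mm_pos d k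
  set F := Finset.univ.filter (fun i : Fin n => (A i).card = 2) with hF
  have hdm := Nat.div_add_mod (n - 2*d) (mm d k)
  have hmod : (n - 2*d) % (mm d k) < (mm d k) := Nat.mod_lt _ hmpos
  -- split
  have hsplit1 := Finset.card_filter_add_card_filter_not
    (s := F) (p := fun i : Fin n => (i:ℕ) < d)
  have hsplit2 := Finset.card_filter_add_card_filter_not
    (s := F.filter (fun i : Fin n => ¬ (i:ℕ) < d)) (p := fun i : Fin n => (i:ℕ) < d + ((n - 2*d) / mm d k)*(mm d k))
  -- B1
  have hB1 : (F.filter (fun i : Fin n => (i:ℕ) < d)).card ≤ d := by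
    have := Finset.card_le_card_of_injOn (fun i : Fin n => (i:ℕ))
      (s := F.filter (fun i : Fin n => (i:ℕ) < d)) (t := Finset.range d)
      (fun i hi => Finset.mem_range.mpr (Finset.mem_filter.mp hi).2)
      (fun i _ j _ h => Fin.ext h)
    simpa using this
  -- B3
  have hB3 : ((F.filter (fun i : Fin n => ¬ (i:ℕ) < d)).filter
      (fun i : Fin n => ¬ (i:ℕ) < d + ((n - 2*d) / mm d k)*(mm d k))).card ≤ (mm d k) + d := by
    have := Finset.card_le_card_of_injOn (fun i : Fin n => (i:ℕ) - (d + ((n - 2*d) / mm d k)*(mm d k)))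
      (s := (F.filter (fun i : Fin n => ¬ (i:ℕ) < d)).filter
        (fun i : Fin n => ¬ (i:ℕ) < d + ((n - 2*d) / mm d k)*(mm d k))) (t := Finset.range ((mm d k) + d))
      (fun i hi => ?_) (fun i hi j hj h => ?_)
    · simpa using this
    · have h1 := (Finset.mem_filter.mp hi).2
      have hin := i.isLt
      have hcomm : (mm d k) * ((n - 2*d) / mm d k) = ((n - 2*d) / mm d k) * (mm d k) := by ring
      rw [Finset.mem_coe, Finset.mem_range]
      show (i:ℕ) - (d + ((n - 2*d) / mm d k)*(mm d k)) < (mm d k) + d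
      omega
    · have h1 := (Finset.mem_filter.mp hi).2
      have h2 := (Finset.mem_filter.mp hj).2
      rw [Finset.mem_coe, Finset.mem_filter] at hi hj
      have h' : (i:ℕ) - (d + ((n - 2*d) / mm d k)*(mm d k)) = (j:ℕ) - (d + ((n - 2*d) / mm d k)*(mm d k)) := h
      apply Fin.ext
      omega
  -- B2
  have hB2 : ((F.filter (fun i : Fin n => ¬ (i:ℕ) < d)).filter
      (fun i : Fin n => (i:ℕ) < d + ((n - 2*d) / mm d k)*(mm d k))).card ≤ (pp d k) * ((n - 2*d) / mm d k) := by
    have hsub : (F.filter (fun i : Fin n => ¬ (i:ℕ) < d)).filter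
        (fun i : Fin n => (i:ℕ) < d + ((n - 2*d) / mm d k)*(mm d k)) ⊆
        (Finset.range ((n - 2*d) / mm d k)).biUnion (fun t => Finset.univ.filter (fun i : Fin n =>
          (A i).card = 2 ∧ (d + t*(mm d k)) ≤ (i:ℕ) ∧ (i:ℕ) < (d + t*(mm d k)) + (mm d k))) := by
      intro i hi
      rw [Finset.mem_filter, Finset.mem_filter, hF, Finset.mem_filter] at hi
      obtain ⟨⟨⟨_, hc⟩, hd1⟩, hd2⟩ := hi
      rw [Finset.mem_biUnion]
      refine ⟨((i:ℕ) - d) / (mm d k), Finset.mem_range.mpr ?_, ?_⟩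
      · rw [Nat.div_lt_iff_lt_mul hmpos]
        omega
      · rw [Finset.mem_filter]
        have e1 := Nat.div_add_mod ((i:ℕ) - d) (mm d k)
        have e2 : ((i:ℕ) - d) % (mm d k) < (mm d k) := Nat.mod_lt _ hmpos
        have e3 : (((i:ℕ) - d) / (mm d k)) * (mm d k) = (mm d k) * (((i:ℕ) - d) / (mm d k)) := by ring
        refine ⟨Finset.mem_univ _, hc, by omega, by omega⟩
    calc ((F.filter (fun i : Fin n => ¬ (i:ℕ) < d)).filter
        (fun i : Fin n => (i:ℕ) < d + ((n - 2*d) / mm d k)*(mm d k))).card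
        ≤ ∑ t ∈ Finset.range ((n - 2*d) / mm d k), (Finset.univ.filter (fun i : Fin n =>
          (A i).card = 2 ∧ (d + t*(mm d k)) ≤ (i:ℕ) ∧ (i:ℕ) < (d + t*(mm d k)) + (mm d k))).card :=
          le_trans (Finset.card_le_card hsub) (Finset.card_biUnion_le)
      _ ≤ ∑ _t ∈ Finset.range ((n - 2*d) / mm d k), (pp d k) := by
          apply Finset.sum_le_sum
          intro t ht
          rw [Finset.mem_range] at ht
          have ha : d ≤ d + t*(mm d k) := by omega
          have hbb : (d + t*(mm d k)) + (mm d k) + d ≤ n := by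
            have : (t+1) * (mm d k) ≤ ((n - 2*d) / mm d k) * (mm d k) := Nat.mul_le_mul_right _ (by omega)
            have h4 : (t+1)*(mm d k) = t*(mm d k) + (mm d k) := by ring
            have h5 : (mm d k) * ((n - 2*d) / mm d k) = ((n - 2*d) / mm d k) * (mm d k) := by
              ring
            omega
          exact window_bound hdk hA (d + t*(mm d k)) ha hbb
      _ = (pp d k) * ((n - 2*d) / mm d k) := by rw [Finset.sum_const, Finset.card_range, smul_eq_mul, mul_comm]
  have hTle : (pp d k) * ((n - 2*d) / mm d k) ≤ (pp d k) * (n / (mm d k)) :=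
    Nat.mul_le_mul_left _ (Nat.div_le_div_right (by omega))
  omega

end Stmt13Aux

namespace Stmt13Aux

lemma log2_nonneg : (0:ℝ) ≤ Real.log 2 := Real.log_nonneg (by norm_num)

lemma maxScore_le (d k n : ℕ) (hdk : d < k) :
    rllMaxScore d k n ≤ ((2*d + mm d k + pp d k * (n / mm d k) : ℕ) : ℝ) * Real.log 2 := by
  apply Real.sSup_le
  · rintro r ⟨A, hA, rfl⟩
    rw [score_eq A hA.1]
    apply mul_le_mul_of_nonneg_right _ log2_nonneg
    exact_mod_cast free_count_bound hdk hA
  · positivity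

lemma maxScore_ge (d k n : ℕ) (hdk : d < k) :
    ((pp d k * (n / mm d k) : ℕ) : ℝ) * Real.log 2 ≤ rllMaxScore d k n := by
  have hleg := Acon_legal d k n hdk
  have hmem : (((Finset.univ.filter (fun i : Fin n => (Acon d k n i).card = 2)).card : ℝ)
      * Real.log 2) ∈ {r : ℝ | ∃ A : Fin n → Finset Bool, rllIndepLegal d k A ∧
        r = ∑ i, Real.log ((A i).card)} :=
    ⟨Acon d k n, hleg, (score_eq _ hleg.1).symm⟩
  have hbdd : BddAbove {r : ℝ | ∃ A : Fin n → Finset Bool, rllIndepLegal d k A ∧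
      r = ∑ i, Real.log ((A i).card)} := by
    refine ⟨((2*d + mm d k + pp d k * (n / mm d k) : ℕ) : ℝ) * Real.log 2, ?_⟩
    rintro r ⟨A, hA, rfl⟩
    rw [score_eq A hA.1]
    apply mul_le_mul_of_nonneg_right _ log2_nonneg
    exact_mod_cast free_count_bound hdk hA
  calc ((pp d k * (n / mm d k) : ℕ) : ℝ) * Real.log 2
      ≤ ((Finset.univ.filter (fun i : Fin n => (Acon d k n i).card = 2)).card : ℝ)
        * Real.log 2 := by
        apply mul_le_mul_of_nonneg_right _ log2_nonneg
        exact_mod_cast Acon_count d k n hdk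
    _ ≤ rllMaxScore d k n := le_csSup hbdd hmem

lemma tendsto_linear_div (u v : ℝ) :
    Filter.Tendsto (fun n : ℕ => (u * n + v) / n) Filter.atTop (nhds u) := by
  have h1 : Filter.Tendsto (fun n : ℕ => u + v * ((n:ℝ))⁻¹) Filter.atTop (nhds u) := by
    have h0 : Filter.Tendsto (fun n : ℕ => ((n:ℝ))⁻¹) Filter.atTop (nhds 0) :=
      tendsto_inv_atTop_zero.comp tendsto_natCast_atTop_atTop
    have := Filter.Tendsto.const_mul v h0
    rw [mul_zero] at this
    simpa using Filter.Tendsto.const_add u this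
  apply Filter.Tendsto.congr' _ h1
  filter_upwards [Filter.eventually_ge_atTop 1] with n hn
  have hn0 : ((n:ℝ)) ≠ 0 := by positivity
  field_simp

end Stmt13Aux

open Stmt13Aux

/-- For `0 ≤ d < k < ∞`, the independence entropy of `RLL(d,k)` equals
`⌊(k−d)/(d+1)⌋·log 2 / (⌊(k+1)/(d+1)⌋·(d+1))`. -/
theorem stmt13 (d k : ℕ) (hdk : d < k) :
    Tendsto (fun n : ℕ => rllMaxScore d k n / n) atTop
      (nhds ((((k - d) / (d + 1) : ℕ) : ℝ) * Real.log 2 /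
        ((((k + 1) / (d + 1) : ℕ) : ℝ) * (d + 1)))) := by
  have hm0 : (0:ℝ) < (mm d k : ℝ) := by exact_mod_cast mm_pos d k
  have hL := log2_nonneg
  have hp0 : (0:ℝ) ≤ (pp d k : ℝ) := Nat.cast_nonneg _
  suffices h : Tendsto (fun n : ℕ => rllMaxScore d k n / n) atTop
      (nhds ((pp d k : ℝ) * Real.log 2 / (mm d k : ℝ))) by
    convert h using 2
    rw [div_succ d k hdk]
    have h1 : ((mm d k : ℕ) : ℝ) = ((pp d k + 1 : ℕ) : ℝ) * ((d:ℝ) + 1) := by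
      rw [mm]; push_cast; ring
    rw [h1, pp]
  refine tendsto_of_tendsto_of_tendsto_of_le_of_le'
    (tendsto_linear_div ((pp d k : ℝ) * Real.log 2 / (mm d k : ℝ))
      (-((pp d k : ℝ) * Real.log 2)))
    (tendsto_linear_div ((pp d k : ℝ) * Real.log 2 / (mm d k : ℝ))
      ((2*(d:ℝ) + (mm d k : ℝ)) * Real.log 2)) ?_ ?_
  · -- lower bound
    filter_upwards [eventually_ge_atTop 1] with n hn
    have hn0 : (0:ℝ) < (n:ℝ) := by exact_mod_cast (by omega : 0 < n)
    rw [div_le_div_iff_of_pos_right hn0]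
    refine le_trans ?_ (maxScore_ge d k n hdk)
    have h1 : (n:ℝ) / (mm d k : ℝ) - 1 ≤ ((n / mm d k : ℕ) : ℝ) := by
      have hc : (n:ℝ) < (mm d k : ℝ) * ((n / mm d k : ℕ) : ℝ) + (mm d k : ℝ) := by
        have hdm := Nat.div_add_mod n (mm d k)
        have hmod : n % mm d k < mm d k := Nat.mod_lt _ (mm_pos d k)
        exact_mod_cast (by omega : n < mm d k * (n / mm d k) + mm d k)
      rw [sub_le_iff_le_add, div_le_iff₀ hm0]
      nlinarith [hc]
    calc (pp d k : ℝ) * Real.log 2 / (mm d k : ℝ) * n + (-((pp d k : ℝ) * Real.log 2))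
        = ((n:ℝ) / (mm d k : ℝ) - 1) * ((pp d k : ℝ) * Real.log 2) := by ring
      _ ≤ ((n / mm d k : ℕ) : ℝ) * ((pp d k : ℝ) * Real.log 2) :=
          mul_le_mul_of_nonneg_right h1 (mul_nonneg hp0 hL)
      _ = ((pp d k * (n / mm d k) : ℕ) : ℝ) * Real.log 2 := by push_cast; ring
  · -- upper bound
    filter_upwards [eventually_ge_atTop 1] with n hn
    have hn0 : (0:ℝ) < (n:ℝ) := by exact_mod_cast (by omega : 0 < n)
    rw [div_le_div_iff_of_pos_right hn0]
    refine le_trans (maxScore_le d k n hdk) ?_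
    have h1 : ((n / mm d k : ℕ) : ℝ) ≤ (n:ℝ) / (mm d k : ℝ) := Nat.cast_div_le
    calc ((2*d + mm d k + pp d k * (n / mm d k) : ℕ) : ℝ) * Real.log 2
        = ((n / mm d k : ℕ) : ℝ) * ((pp d k : ℝ) * Real.log 2)
          + (2*(d:ℝ) + (mm d k : ℝ)) * Real.log 2 := by push_cast; ring
      _ ≤ ((n:ℝ) / (mm d k : ℝ)) * ((pp d k : ℝ) * Real.log 2)
          + (2*(d:ℝ) + (mm d k : ℝ)) * Real.log 2 := by
          apply add_le_add_left
          exact mul_le_mul_of_nonneg_right h1 (mul_nonneg hp0 hL)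
      _ = (pp d k : ℝ) * Real.log 2 / (mm d k : ℝ) * n
          + (2*(d:ℝ) + (mm d k : ℝ)) * Real.log 2 := by ring
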